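/- (Inequality (2.14), bound on the weights of G*_{m+1}) The weights satisfy λ*_1 ≤ μ((−∞, x*_2]), λ*_k ≤ μ((x*_{k−1}, x*_{k+1}]) for every 2 ≤ k ≤ m, and λ*_{m+1} ≤ μ((x*_m, ∞)). -/

import Mathlib

open MeasureTheory Polynomial

namespace Stmt3Aux
open Set Finset



/-- One Rolle step: from `K+2` zeros of `F 0` in `Ioi a`, produce `K+1` zeros of `F 1`,
each strictly between two elements of the original set. -/
lemma rolle_step {a : ℝ} {f g : ℝ → ℝ}
    (hd : ∀ x ∈ Set.Ioi a, HasDerivAt f (g x) x)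
    {K : ℕ} {S : Finset ℝ} (hS : ↑S ⊆ Set.Ioi a) (hcard : S.card = K + 2)
    (hz : ∀ x ∈ S, f x = 0) :
    ∃ T : Finset ℝ, ↑T ⊆ Set.Ioi a ∧ T.card = K + 1 ∧ (∀ x ∈ T, g x = 0) ∧
      (∀ x ∈ T, ∃ y₁ ∈ S, ∃ y₂ ∈ S, y₁ < x ∧ x < y₂) := by
  have e := S.orderIsoOfFin hcard
  set pi : Fin (K + 2) → ℝ := fun j => (e j : ℝ) with hpi
  have hpiS : ∀ j, pi j ∈ S := fun j => (e j).2
  have hpim : StrictMono pi := by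
    intro i j hij
    exact (e.lt_iff_lt.2 hij)
  have hIoi : ∀ j, pi j ∈ Set.Ioi a := fun j => hS (hpiS j)
  have H : ∀ j : Fin (K + 1), ∃ c,
      c ∈ Set.Ioo (pi j.castSucc) (pi j.succ) ∧ g c = 0 := by
    intro j
    have hlt : pi j.castSucc < pi j.succ := hpim (by simp [Fin.lt_def])
    have hcont : ContinuousOn f (Set.Icc (pi j.castSucc) (pi j.succ)) := by
      intro x hx
      have hxI : x ∈ Set.Ioi a := lt_of_lt_of_le (hIoi j.castSucc) hx.1
      exact ((hd x hxI).continuousAt).continuousWithinAt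
    have heq : f (pi j.castSucc) = f (pi j.succ) := by
      rw [hz _ (hpiS _), hz _ (hpiS _)]
    obtain ⟨c, hc, hc0⟩ := exists_deriv_eq_zero hlt hcont heq
    refine ⟨c, hc, ?_⟩
    have hcI : c ∈ Set.Ioi a := lt_trans (hIoi j.castSucc) hc.1
    rw [← hc0]
    exact ((hd c hcI).deriv).symm
  choose ξ hmem hzero using H
  have hξm : StrictMono ξ := by
    intro i j hij
    have h1 : ξ i < pi i.succ := (hmem i).2
    have h2 : pi j.castSucc < ξ j := (hmem j).1
    have h3 : pi i.succ ≤ pi j.castSucc := by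
      apply hpim.monotone
      simp only [Fin.le_def, Fin.val_succ, Fin.coe_castSucc]
      exact hij
    linarith
  refine ⟨Finset.image ξ Finset.univ, ?_, ?_, ?_, ?_⟩
  · intro x hx
    simp only [Finset.coe_image, Finset.coe_univ, Set.image_univ, Set.mem_range] at hx
    obtain ⟨j, rfl⟩ := hx
    exact lt_trans (hIoi j.castSucc) (hmem j).1
  · rw [Finset.card_image_of_injective _ hξm.injective, Finset.card_univ, Fintype.card_fin]
  · intro x hx
    simp only [Finset.mem_image, Finset.mem_univ, true_and] at hx
    obtain ⟨j, rfl⟩ := hx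
    exact hzero j
  · intro x hx
    simp only [Finset.mem_image, Finset.mem_univ, true_and] at hx
    obtain ⟨j, rfl⟩ := hx
    exact ⟨pi j.castSucc, hpiS _, pi j.succ, hpiS _, (hmem j).1, (hmem j).2⟩

/-- Iterated Rolle theorem for a sequence of derivatives. -/
lemma rolle_iter {a : ℝ} : ∀ (K : ℕ) (F : ℕ → ℝ → ℝ),
    (∀ k, ∀ x ∈ Set.Ioi a, HasDerivAt (F k) (F (k + 1) x) x) →
    ∀ S : Finset ℝ, ↑S ⊆ Set.Ioi a → S.card = K + 1 → (∀ x ∈ S, F 0 x = 0) →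
    ∃ ξ ∈ Set.Ioi a, F K ξ = 0 ∧
      (∀ lo, (∀ y ∈ S, lo ≤ y) → lo ≤ ξ) ∧ (∀ hi, (∀ y ∈ S, y ≤ hi) → ξ ≤ hi) := by
  intro K
  induction K with
  | zero =>
    intro F _ S hS hcard hz
    have hne : S.Nonempty := Finset.card_pos.1 (by omega)
    obtain ⟨x, hx⟩ := hne
    exact ⟨x, hS hx, hz x hx, fun lo hlo => hlo x hx, fun hi hhi => hhi x hx⟩
  | succ K ih =>
    intro F hd S hS hcard hz
    obtain ⟨T, hT, hTcard, hTz, hTb⟩ := rolle_step (hd 0) hS hcard hz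
    obtain ⟨ξ, hξI, hξ0, hξlo, hξhi⟩ := ih (fun k => F (k + 1)) (fun k => hd (k + 1)) T hT hTcard hTz
    refine ⟨ξ, hξI, hξ0, ?_, ?_⟩
    · intro lo hlo
      apply hξlo
      intro y hy
      obtain ⟨y₁, hy₁, y₂, hy₂, h₁, h₂⟩ := hTb y hy
      exact le_of_lt (lt_of_le_of_lt (hlo y₁ hy₁) h₁)
    · intro hi hhi
      apply hξhi
      intro y hy
      obtain ⟨y₁, hy₁, y₂, hy₂, h₁, h₂⟩ := hTb y hy
      exact le_of_lt (lt_of_lt_of_le h₂ (hhi y₂ hy₂))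




/-- A "completely monotone system" on `Ioi a`: a chain of derivatives with alternating signs. -/
def IsCM (a : ℝ) (F : ℕ → ℝ → ℝ) : Prop :=
  (∀ k, ∀ x ∈ Set.Ioi a, HasDerivAt (F k) (F (k + 1) x) x) ∧
  (∀ k, ∀ x ∈ Set.Ioi a, 0 ≤ (-1 : ℝ) ^ k * F k x)

noncomputable def brick (c : ℝ) : ℕ → ℝ → ℝ :=
  fun k x => (-1) ^ k * (Nat.factorial (k + 1) : ℝ) * ((x - c) ^ (k + 2))⁻¹

lemma isCM_brick {c a : ℝ} (hca : c ≤ a) : IsCM a (brick c) := by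
  constructor
  · intro k x hx
    have hxc : x - c ≠ 0 := by
      have : a < x := hx
      have : c < x := lt_of_le_of_lt hca this
      linarith
    have h1 : HasDerivAt (fun x : ℝ => x - c) 1 x := (hasDerivAt_id x).sub_const c
    have hp : HasDerivAt (fun x : ℝ => (x - c) ^ (k + 2))
        ((k + 2 : ℕ) * (x - c) ^ (k + 1) * 1) x := h1.pow (k + 2)
    have hinv : HasDerivAt (fun x : ℝ => ((x - c) ^ (k + 2))⁻¹)
        (-((k + 2 : ℕ) * (x - c) ^ (k + 1) * 1) / ((x - c) ^ (k + 2)) ^ 2) x :=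
      hp.inv (pow_ne_zero _ hxc)
    have hD := hinv.const_mul ((-1 : ℝ) ^ k * (Nat.factorial (k + 1) : ℝ))
    refine hD.congr_deriv (Eq.symm ?_)
    show brick c (k + 1) x = _
    unfold brick
    set t := x - c with ht
    have hsq : (t ^ (k + 2)) ^ 2 = t ^ (k + 1) * t ^ (k + 3) := by
      rw [← pow_mul, ← pow_add]
      congr 1
      omega
    have hfac : (Nat.factorial (k + 1 + 1) : ℝ) = (k + 2 : ℝ) * (Nat.factorial (k + 1) : ℝ) := by
      rw [Nat.factorial_succ]
      push_cast
      ring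
    rw [hsq, hfac]
    have h1ne : t ^ (k + 1) ≠ 0 := pow_ne_zero _ hxc
    have h3ne : t ^ (k + 3) ≠ 0 := pow_ne_zero _ hxc
    field_simp
    push_cast
    ring
  · intro k x hx
    have hxc : 0 < x - c := by
      have : a < x := hx
      linarith [lt_of_le_of_lt hca this]
    unfold brick
    have : (-1 : ℝ) ^ k * ((-1) ^ k * (Nat.factorial (k + 1) : ℝ) * ((x - c) ^ (k + 2))⁻¹)
        = (Nat.factorial (k + 1) : ℝ) * ((x - c) ^ (k + 2))⁻¹ := by
      have h : (-1 : ℝ) ^ k * (-1 : ℝ) ^ k = 1 := by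
        rw [← pow_add, ← two_mul, pow_mul]
        norm_num
      calc (-1 : ℝ) ^ k * ((-1) ^ k * (Nat.factorial (k + 1) : ℝ) * ((x - c) ^ (k + 2))⁻¹)
          = ((-1 : ℝ) ^ k * (-1 : ℝ) ^ k) * ((Nat.factorial (k + 1) : ℝ) * ((x - c) ^ (k + 2))⁻¹) := by ring
        _ = (Nat.factorial (k + 1) : ℝ) * ((x - c) ^ (k + 2))⁻¹ := by rw [h, one_mul]
    rw [this]
    positivity

noncomputable def cmMul (F G : ℕ → ℝ → ℝ) : ℕ → ℝ → ℝ :=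
  fun k x => ∑ j ∈ Finset.range (k + 1), (k.choose j : ℝ) * F j x * G (k - j) x

lemma leibniz_sum (A B : ℕ → ℝ) (k : ℕ) :
    ∑ j ∈ Finset.range (k + 1), (k.choose j : ℝ) * (A (j + 1) * B (k - j) + A j * B (k - j + 1))
      = ∑ j ∈ Finset.range (k + 2), ((k + 1).choose j : ℝ) * A j * B (k + 1 - j) := by
  set S1 := ∑ j ∈ Finset.range (k + 1), (k.choose j : ℝ) * A (j + 1) * B (k - j) with hS1
  set S2x := ∑ j ∈ Finset.range (k + 1), (k.choose (j + 1) : ℝ) * A (j + 1) * B (k - j) with hS2x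
  have hLHS : ∑ j ∈ Finset.range (k + 1),
      (k.choose j : ℝ) * (A (j + 1) * B (k - j) + A j * B (k - j + 1))
      = S1 + ∑ j ∈ Finset.range (k + 1), (k.choose j : ℝ) * A j * B (k - j + 1) := by
    rw [hS1, ← Finset.sum_add_distrib]
    apply Finset.sum_congr rfl
    intro j _; ring
  have hS2 : ∑ j ∈ Finset.range (k + 1), (k.choose j : ℝ) * A j * B (k - j + 1)
      = S2x + A 0 * B (k + 1) := by
    rw [Finset.sum_range_succ' (fun j => (k.choose j : ℝ) * A j * B (k - j + 1)) k]
    have e1 : ∀ j ∈ Finset.range k,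
        (k.choose (j + 1) : ℝ) * A (j + 1) * B (k - (j + 1) + 1)
          = (k.choose (j + 1) : ℝ) * A (j + 1) * B (k - j) := by
      intro j hj
      simp only [Finset.mem_range] at hj
      have : k - (j + 1) + 1 = k - j := by omega
      rw [this]
    rw [Finset.sum_congr rfl e1]
    have e2 : S2x = ∑ j ∈ Finset.range k, (k.choose (j + 1) : ℝ) * A (j + 1) * B (k - j) := by
      rw [hS2x, Finset.sum_range_succ]
      simp [Nat.choose_succ_self]
    rw [e2]
    simp [Nat.sub_zero]
  have hRHS : ∑ j ∈ Finset.range (k + 2), ((k + 1).choose j : ℝ) * A j * B (k + 1 - j)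
      = S1 + S2x + A 0 * B (k + 1) := by
    rw [Finset.sum_range_succ' (fun j => ((k + 1).choose j : ℝ) * A j * B (k + 1 - j)) (k + 1)]
    have e3 : ∀ j ∈ Finset.range (k + 1),
        ((k + 1).choose (j + 1) : ℝ) * A (j + 1) * B (k + 1 - (j + 1))
          = (k.choose j : ℝ) * A (j + 1) * B (k - j)
            + (k.choose (j + 1) : ℝ) * A (j + 1) * B (k - j) := by
      intro j _
      rw [Nat.choose_succ_succ k j]
      have : k + 1 - (j + 1) = k - j := by omega
      rw [this]
      push_cast
      ring
    rw [Finset.sum_congr rfl e3, Finset.sum_add_distrib, ← hS1, ← hS2x]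
    simp [Nat.sub_zero]
  rw [hLHS, hS2, hRHS]
  ring

lemma isCM_mul {a : ℝ} {F G : ℕ → ℝ → ℝ} (hF : IsCM a F) (hG : IsCM a G) :
    IsCM a (cmMul F G) := by
  constructor
  · intro k x hx
    have hterm : ∀ j ∈ Finset.range (k + 1), HasDerivAt
        (fun y => (k.choose j : ℝ) * F j y * G (k - j) y)
        ((k.choose j : ℝ) * (F (j + 1) x * G (k - j) x + F j x * G (k - j + 1) x)) x := by
      intro j _
      have h1 := ((hF.1 j x hx).mul (hG.1 (k - j) x hx)).const_mul (k.choose j : ℝ)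
      have hfe : (fun y => (k.choose j : ℝ) * F j y * G (k - j) y)
          = fun y => (k.choose j : ℝ) * (F j y * G (k - j) y) := by
        funext y; ring
      rw [hfe]
      exact h1
    have hsum := HasDerivAt.fun_sum hterm
    have : cmMul F G (k + 1) x
        = ∑ j ∈ Finset.range (k + 1), (k.choose j : ℝ) * (F (j + 1) x * G (k - j) x + F j x * G (k - j + 1) x) := by
      unfold cmMul
      exact (leibniz_sum (fun j => F j x) (fun j => G j x) k).symm
    rw [this]
    exact hsum
  · intro k x hx
    unfold cmMul
    rw [Finset.mul_sum]
    apply Finset.sum_nonneg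
    intro j hj
    simp only [Finset.mem_range] at hj
    have h1 := hF.2 j x hx
    have h2 := hG.2 (k - j) x hx
    have hs : (-1 : ℝ) ^ k = (-1) ^ j * (-1) ^ (k - j) := by
      rw [← pow_add]
      congr 1
      omega
    have : (-1 : ℝ) ^ k * ((k.choose j : ℝ) * F j x * G (k - j) x)
        = (k.choose j : ℝ) * (((-1 : ℝ) ^ j * F j x) * (((-1 : ℝ) ^ (k - j)) * G (k - j) x)) := by
      rw [hs]; ring
    rw [this]
    positivity

def oneSys : ℕ → ℝ → ℝ := fun k _ => if k = 0 then 1 else 0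

lemma isCM_one {a : ℝ} : IsCM a oneSys := by
  constructor
  · intro k x _
    cases k with
    | zero =>
      simp only [oneSys]
      exact hasDerivAt_const x (1 : ℝ)
    | succ n =>
      simp only [oneSys]
      exact hasDerivAt_const x (0 : ℝ)
  · intro k x _
    cases k with
    | zero => simp [oneSys]
    | succ n => simp [oneSys]

noncomputable def prodSys (c : ℕ → ℝ) : ℕ → (ℕ → ℝ → ℝ)
  | 0 => oneSys
  | (p + 1) => cmMul (prodSys c p) (brick (c p))

lemma isCM_prodSys {a : ℝ} {c : ℕ → ℝ} {p : ℕ} (hc : ∀ j < p, c j ≤ a) : IsCM a (prodSys c p) := by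
  induction p with
  | zero => exact isCM_one
  | succ p ih =>
    exact isCM_mul (ih (fun j hj => hc j (by omega))) (isCM_brick (hc p (by omega)))

lemma prodSys_zero (c : ℕ → ℝ) (p : ℕ) (x : ℝ) :
    prodSys c p 0 x = ∏ j ∈ Finset.range p, ((x - c j) ^ 2)⁻¹ := by
  induction p with
  | zero => simp [prodSys, oneSys]
  | succ p ih =>
    show cmMul (prodSys c p) (brick (c p)) 0 x = _
    unfold cmMul
    rw [Finset.sum_range_one, Finset.prod_range_succ, ← ih]
    simp [brick]




noncomputable def nomega (y : ℕ → ℝ) (l : ℕ) : Polynomial ℝ :=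
  ∏ t ∈ Finset.range l, (X - C (y t))

noncomputable def newton (f : ℝ → ℝ) (y : ℕ → ℝ) : ℕ → Polynomial ℝ
  | 0 => C (f (y 0))
  | (l + 1) => newton f y l +
      C ((f (y (l + 1)) - (newton f y l).eval (y (l + 1))) / (nomega y (l + 1)).eval (y (l + 1)))
        * nomega y (l + 1)

lemma nomega_monic (y : ℕ → ℝ) (l : ℕ) : (nomega y l).Monic :=
  monic_prod_of_monic _ _ (fun t _ => monic_X_sub_C (y t))

lemma nomega_natDegree (y : ℕ → ℝ) (l : ℕ) : (nomega y l).natDegree = l := by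
  rw [nomega, natDegree_prod_of_monic _ _ (fun t _ => monic_X_sub_C (y t))]
  simp [natDegree_X_sub_C]

lemma nomega_eval (y : ℕ → ℝ) (l : ℕ) (x : ℝ) :
    (nomega y l).eval x = ∏ t ∈ Finset.range l, (x - y t) := by
  rw [nomega, eval_prod]
  simp

lemma newton_natDegree_le (f : ℝ → ℝ) (y : ℕ → ℝ) (l : ℕ) :
    (newton f y l).natDegree ≤ l := by
  induction l with
  | zero => simp [newton, natDegree_C]
  | succ l ih =>
    rw [newton]
    apply le_trans (natDegree_add_le _ _)
    apply max_le (le_trans ih (by omega))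
    apply le_trans (natDegree_mul_le)
    simp [natDegree_C, nomega_natDegree]

lemma newton_interp (f : ℝ → ℝ) (y : ℕ → ℝ) (L : ℕ)
    (hy : ∀ t t', t < t' → t' ≤ L → y t ≠ y t') :
    ∀ l ≤ L, ∀ t ≤ l, (newton f y l).eval (y t) = f (y t) := by
  intro l
  induction l with
  | zero =>
    intro _ t ht
    interval_cases t
    simp [newton]
  | succ l ih =>
    intro hlL t ht
    rw [newton, eval_add, eval_mul, eval_C]
    rcases Nat.lt_or_ge t (l + 1) with h | h
    · have hz : (nomega y (l + 1)).eval (y t) = 0 := by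
        rw [nomega_eval]
        apply Finset.prod_eq_zero (Finset.mem_range.2 h)
        ring
      rw [hz, mul_zero, add_zero]
      exact ih (by omega) t (by omega)
    · have ht' : t = l + 1 := by omega
      subst ht'
      have hne : (nomega y (l + 1)).eval (y (l + 1)) ≠ 0 := by
        rw [nomega_eval]
        apply Finset.prod_ne_zero_iff.2
        intro t ht
        simp only [Finset.mem_range] at ht
        have := hy t (l + 1) ht hlL
        intro hc
        exact this (by linarith)
      rw [div_mul_cancel₀ _ hne]
      ring

lemma newton_coeff_succ (f : ℝ → ℝ) (y : ℕ → ℝ) (l : ℕ) :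
    (newton f y (l + 1)).coeff (l + 1)
      = (f (y (l + 1)) - (newton f y l).eval (y (l + 1))) / (nomega y (l + 1)).eval (y (l + 1)) := by
  rw [newton, coeff_add, coeff_C_mul]
  have h1 : (newton f y l).coeff (l + 1) = 0 :=
    coeff_eq_zero_of_natDegree_lt (lt_of_le_of_lt (newton_natDegree_le f y l) (by omega))
  have h2 : (nomega y (l + 1)).coeff (l + 1) = 1 := by
    have := (nomega_monic y (l + 1)).coeff_natDegree
    rwa [nomega_natDegree] at this
  rw [h1, h2, zero_add, mul_one]

lemma iterate_derivative_top (p : Polynomial ℝ) (n : ℕ) (h : p.natDegree ≤ n) :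
    derivative^[n] p = C ((Nat.factorial n : ℝ) * p.coeff n) := by
  have hdeg : ∀ k : ℕ, (derivative^[k] p).natDegree ≤ p.natDegree - k := by
    intro k
    induction k with
    | zero => simp
    | succ k ih =>
      rw [Function.iterate_succ_apply']
      calc (derivative (derivative^[k] p)).natDegree ≤ (derivative^[k] p).natDegree - 1 :=
            natDegree_derivative_le _
        _ ≤ p.natDegree - k - 1 := by omega
        _ = p.natDegree - (k + 1) := by omega
  have h0 : (derivative^[n] p).natDegree ≤ 0 := le_trans (hdeg n) (by omega)
  have := Polynomial.eq_C_of_natDegree_le_zero h0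
  rw [this]
  congr 1
  rw [Polynomial.coeff_iterate_derivative]
  rw [zero_add, Nat.descFactorial_self]
  rw [nsmul_eq_mul]

/-- Newton interpolation remainder with a mean-value point. -/
lemma newton_remainder {a : ℝ} {F : ℕ → ℝ → ℝ}
    (hd : ∀ k, ∀ x ∈ Set.Ioi a, HasDerivAt (F k) (F (k + 1) x) x)
    (y : ℕ → ℝ) (L : ℕ)
    (hyI : ∀ t ≤ L, y t ∈ Set.Ioi a)
    (hymono : ∀ t t', t < t' → t' ≤ L → y t < y t')
    (x : ℝ) (hxI : x ∈ Set.Ioi a) (hxy : ∀ t ≤ L, y t ≠ x) :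
    ∃ ξ, a < ξ ∧ min x (y 0) ≤ ξ ∧ ξ ≤ max x (y L) ∧
      F 0 x - (newton (F 0) y L).eval x
        = F (L + 1) ξ / (Nat.factorial (L + 1) : ℝ) * (nomega y (L + 1)).eval x := by
  classical
  set f := F 0 with hf
  set g := newton f y L with hg
  set w := nomega y (L + 1) with hw
  set A := f x - g.eval x with hA
  set wx := w.eval x with hwx
  set ψ : ℕ → ℝ → ℝ := fun k t =>
    A * (derivative^[k] w).eval t - wx * F k t + wx * (derivative^[k] g).eval t with hψ
  have hdψ : ∀ k, ∀ t ∈ Set.Ioi a, HasDerivAt (ψ k) (ψ (k + 1) t) t := by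
    intro k t ht
    have h1 : HasDerivAt (fun t => (derivative^[k] w).eval t)
        ((derivative^[k + 1] w).eval t) t := by
      rw [Function.iterate_succ_apply']
      exact Polynomial.hasDerivAt _ t
    have h2 : HasDerivAt (fun t => (derivative^[k] g).eval t)
        ((derivative^[k + 1] g).eval t) t := by
      rw [Function.iterate_succ_apply']
      exact Polynomial.hasDerivAt _ t
    exact ((h1.const_mul A).sub ((hd k t ht).const_mul wx)).add (h2.const_mul wx)
  set S : Finset ℝ := insert x (Finset.image y (Finset.range (L + 1))) with hS
  have hyinj : Set.InjOn y (Finset.range (L + 1)) := by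
    intro t ht t' ht' h
    simp only [Finset.coe_range, Set.mem_Iio] at ht ht'
    by_contra hne
    rcases Nat.lt_or_ge t t' with hlt | hge
    · exact absurd h (ne_of_lt (hymono t t' hlt (by omega)))
    · have : t' < t := by omega
      exact absurd h.symm (ne_of_lt (hymono t' t this (by omega)))
  have hxnotmem : x ∉ Finset.image y (Finset.range (L + 1)) := by
    simp only [Finset.mem_image, Finset.mem_range]
    rintro ⟨t, ht, hc⟩
    exact hxy t (by omega) hc
  have hScard : S.card = (L + 1) + 1 := by
    rw [hS, Finset.card_insert_of_notMem hxnotmem, Finset.card_image_of_injOn hyinj,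
      Finset.card_range]
  have hSsub : ↑S ⊆ Set.Ioi a := by
    intro z hz
    simp only [hS, Finset.coe_insert, Set.mem_insert_iff, Finset.coe_image, Set.mem_image,
      Finset.coe_range, Set.mem_Iio] at hz
    rcases hz with rfl | ⟨t, ht, rfl⟩
    · exact hxI
    · exact hyI t (by omega)
  have hSz : ∀ z ∈ S, ψ 0 z = 0 := by
    intro z hz
    simp only [hS, Finset.mem_insert, Finset.mem_image, Finset.mem_range] at hz
    rcases hz with rfl | ⟨t, ht, rfl⟩
    · simp only [hψ, Function.iterate_zero, id_eq]
      rw [hA, hf]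
      ring
    · simp only [hψ, Function.iterate_zero, id_eq]
      have hint : g.eval (y t) = f (y t) := by
        apply newton_interp f y L (fun t t' h h' => ne_of_lt (hymono t t' h h')) L le_rfl t
        omega
      have hwz : w.eval (y t) = 0 := by
        rw [hw, nomega_eval]
        apply Finset.prod_eq_zero (Finset.mem_range.2 (by omega : t < L + 1))
        ring
      rw [hwz, hint, ← hf]
      ring
  obtain ⟨ξ, hξI, hξ0, hξlo, hξhi⟩ := rolle_iter (L + 1) ψ hdψ S hSsub hScard hSz
  have hwtop : derivative^[L + 1] w = C ((Nat.factorial (L + 1) : ℝ)) := by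
    have hmon := nomega_monic y (L + 1)
    have hdeg := nomega_natDegree y (L + 1)
    have := iterate_derivative_top w (L + 1) (by rw [hw, hdeg])
    rw [this]
    congr 1
    have hc : w.coeff (L + 1) = 1 := by
      have := hmon.coeff_natDegree
      rwa [hdeg] at this
    rw [hc, mul_one]
  have hgtop : derivative^[L + 1] g = 0 :=
    iterate_derivative_eq_zero (lt_of_le_of_lt (newton_natDegree_le f y L) (by omega))
  have hψL : ψ (L + 1) ξ = A * (Nat.factorial (L + 1) : ℝ) - wx * F (L + 1) ξ := by
    simp only [hψ, hwtop, hgtop, eval_C, eval_zero]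
    ring
  rw [hψL] at hξ0
  have hfact : (Nat.factorial (L + 1) : ℝ) ≠ 0 := by
    exact_mod_cast Nat.factorial_ne_zero (L + 1)
  refine ⟨ξ, hξI, ?_, ?_, ?_⟩
  · apply hξlo
    intro z hz
    simp only [hS, Finset.mem_insert, Finset.mem_image, Finset.mem_range] at hz
    rcases hz with rfl | ⟨t, ht, rfl⟩
    · exact min_le_left _ _
    · apply le_trans (min_le_right x (y 0))
      rcases Nat.eq_zero_or_pos t with rfl | htpos
      · exact le_refl _
      · exact le_of_lt (hymono 0 t htpos (by omega))
  · apply hξhi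
    intro z hz
    simp only [hS, Finset.mem_insert, Finset.mem_image, Finset.mem_range] at hz
    rcases hz with rfl | ⟨t, ht, rfl⟩
    · exact le_max_left _ _
    · apply le_trans _ (le_max_right x (y L))
      rcases Nat.lt_or_ge t L with hlt | hge
      · exact le_of_lt (hymono t L hlt le_rfl)
      · have : t = L := by omega
        subst this
        exact le_refl _
  · have : A = F (L + 1) ξ / (Nat.factorial (L + 1) : ℝ) * wx := by
      field_simp at hξ0 ⊢
      linarith
    exact this


lemma prod_sub_comm (y : ℕ → ℝ) (L : ℕ) (x : ℝ) :
    ∏ t ∈ Finset.range L, (x - y t) = (-1) ^ L * ∏ t ∈ Finset.range L, (y t - x) := by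
  induction L with
  | zero => simp
  | succ L ih =>
    rw [Finset.prod_range_succ, Finset.prod_range_succ, ih, pow_succ]
    ring

/-- Mean-value representation of the top Newton coefficient. -/
lemma newton_coeff_mv {a : ℝ} {F : ℕ → ℝ → ℝ}
    (hd : ∀ k, ∀ x ∈ Set.Ioi a, HasDerivAt (F k) (F (k + 1) x) x)
    (y : ℕ → ℝ) (l : ℕ)
    (hyI : ∀ t ≤ l + 1, y t ∈ Set.Ioi a)
    (hymono : ∀ t t', t < t' → t' ≤ l + 1 → y t < y t') :
    ∃ ξ, a < ξ ∧ ξ ≤ y (l + 1) ∧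
      (newton (F 0) y (l + 1)).coeff (l + 1) = F (l + 1) ξ / (Nat.factorial (l + 1) : ℝ) := by
  have hx : y (l + 1) ∈ Set.Ioi a := hyI (l + 1) le_rfl
  have hxy : ∀ t ≤ l, y t ≠ y (l + 1) := fun t ht => ne_of_lt (hymono t (l + 1) (by omega) le_rfl)
  obtain ⟨ξ, hξa, hξlo, hξhi, hrem⟩ := newton_remainder hd y l (fun t ht => hyI t (by omega))
    (fun t t' h h' => hymono t t' h (by omega)) (y (l + 1)) hx hxy
  have hne : (nomega y (l + 1)).eval (y (l + 1)) ≠ 0 := by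
    rw [nomega_eval]
    apply Finset.prod_ne_zero_iff.2
    intro t ht
    simp only [Finset.mem_range] at ht
    have := hymono t (l + 1) (by omega) le_rfl
    intro hc; linarith
  refine ⟨ξ, hξa, ?_, ?_⟩
  · calc ξ ≤ max (y (l + 1)) (y l) := hξhi
      _ = y (l + 1) := max_eq_left (le_of_lt (hymono l (l + 1) (by omega) le_rfl))
  · rw [newton_coeff_succ, hrem, mul_div_assoc, div_self hne, mul_one]
/-- Nonnegativity of the Newton interpolant to the left of all the nodes (for a CM system). -/
lemma newton_nonneg_left {a : ℝ} {F : ℕ → ℝ → ℝ} (hcm : IsCM a F)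
    (y : ℕ → ℝ) (L : ℕ)
    (hyI : ∀ t ≤ L, y t ∈ Set.Ioi a)
    (hymono : ∀ t t', t < t' → t' ≤ L → y t < y t') :
    ∀ x ≤ y 0, 0 ≤ (newton (F 0) y L).eval x := by
  induction L with
  | zero =>
    intro x _
    show 0 ≤ (C (F 0 (y 0))).eval x
    rw [eval_C]
    have := hcm.2 0 (y 0) (hyI 0 le_rfl)
    simpa using this
  | succ L ih =>
    intro x hx
    rw [newton, eval_add, eval_mul, eval_C]
    have h1 : 0 ≤ (newton (F 0) y L).eval x :=
      ih (fun t ht => hyI t (by omega)) (fun t t' h h' => hymono t t' h (by omega)) x hx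
    have h2 : 0 ≤ ((F 0 (y (L + 1)) - (newton (F 0) y L).eval (y (L + 1))) /
        (nomega y (L + 1)).eval (y (L + 1))) * (nomega y (L + 1)).eval x := by
      have hcoeff := newton_coeff_succ (F 0) y L
      obtain ⟨ξ, hξa, _, hmv⟩ := newton_coeff_mv hcm.1 y L hyI hymono
      rw [← hcoeff, hmv]
      rw [nomega_eval, prod_sub_comm]
      have hsign := hcm.2 (L + 1) ξ hξa
      have hprod : 0 ≤ ∏ t ∈ Finset.range (L + 1), (y t - x) := by
        apply Finset.prod_nonneg
        intro t ht
        simp only [Finset.mem_range] at ht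
        have : y 0 ≤ y t := by
          rcases Nat.eq_zero_or_pos t with rfl | htpos
          · exact le_refl _
          · exact le_of_lt (hymono 0 t htpos (by omega))
        linarith
      have hkey : 0 ≤ ((-1 : ℝ) ^ (L + 1) * F (L + 1) ξ) / (Nat.factorial (L + 1) : ℝ) := by
        apply div_nonneg hsign (by positivity)
      calc (0 : ℝ) ≤ (((-1 : ℝ) ^ (L + 1) * F (L + 1) ξ) / (Nat.factorial (L + 1) : ℝ))
            * ∏ t ∈ Finset.range (L + 1), (y t - x) := mul_nonneg hkey hprod
        _ = F (L + 1) ξ / (Nat.factorial (L + 1) : ℝ)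
            * ((-1) ^ (L + 1) * ∏ t ∈ Finset.range (L + 1), (y t - x)) := by ring
    linarith

lemma mono_of_adj {y : ℕ → ℝ} {L : ℕ} (h : ∀ k, k + 1 ≤ L → y k < y (k + 1)) :
    ∀ t t', t < t' → t' ≤ L → y t < y t' := by
  have key : ∀ d t, t + d + 1 ≤ L → y t < y (t + d + 1) := by
    intro d
    induction d with
    | zero => intro t ht; exact h t (by omega)
    | succ d ih =>
      intro t ht
      have h1 : y t < y (t + d + 1) := ih t (by omega)
      have h2 : y (t + d + 1) < y (t + d + 2) := h (t + d + 1) (by omega)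
      have : t + (d + 1) + 1 = t + d + 2 := by omega
      rw [this]
      linarith
  intro t t' hlt hle
  have : t' = t + (t' - t - 1) + 1 := by omega
  rw [this]
  exact key (t' - t - 1) t (by omega)

lemma prod_pair (h : ℕ → ℝ) (s : ℕ) :
    ∏ t ∈ Finset.range (2 * s), h (t + 1) = ∏ j ∈ Finset.range s, (h (2 * j + 1) * h (2 * j + 2)) := by
  induction s with
  | zero => simp
  | succ s ih =>
    have : 2 * (s + 1) = (2 * s + 1) + 1 := by omega
    rw [this, Finset.prod_range_succ, Finset.prod_range_succ, ih, Finset.prod_range_succ]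
    have e1 : 2 * s + 1 + 1 = 2 * s + 2 := by omega
    rw [e1]
    ring

lemma coeff_mul_top {u g : Polynomial ℝ} (hu : u.Monic) {du N : ℕ} (hud : u.natDegree = du)
    (hg : g.natDegree ≤ N) : (u * g).coeff (du + N) = g.coeff N := by
  rcases eq_or_ne g 0 with rfl | hg0
  · simp
  rcases lt_or_eq_of_le hg with hlt | heq
  · have h1 : (u * g).natDegree < du + N := by
      calc (u * g).natDegree ≤ u.natDegree + g.natDegree := natDegree_mul_le
        _ < du + N := by omega
    rw [coeff_eq_zero_of_natDegree_lt h1, coeff_eq_zero_of_natDegree_lt hlt]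
  · have := Polynomial.coeff_mul_degree_add_degree u g
    rw [hud, heq] at this
    rw [this, hu.leadingCoeff, one_mul, Polynomial.leadingCoeff, heq]

open MeasureTheory in
set_option maxHeartbeats 1600000 in
lemma coreU (μ : Measure ℝ) [IsFiniteMeasure μ]
    (hint : ∀ q : Polynomial ℝ, Integrable (fun x => q.eval x) μ)
    (n : ℕ) (hn : 1 ≤ n) (t : Fin (n + 1) → ℝ) (ht : StrictMono t)
    (w : Fin (n + 1) → ℝ) (hw : ∀ j, 0 < w j)
    (κ : ℝ) (hκ : 0 ≤ κ)
    (hE : ∀ q : Polynomial ℝ, q.natDegree ≤ 2 * n →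
      ∑ j, w j * q.eval (t j) = (∫ x, q.eval x ∂μ) + κ * q.coeff (2 * n))
    (i : ℕ) (hi : i + 1 ≤ n) :
    ∑ j ∈ Finset.univ.filter (fun j : Fin (n + 1) => (j : ℕ) ≤ i), w j
      ≤ (μ (Set.Iio (t ⟨i + 1, by omega⟩))).toReal := by
  classical
  -- basic node notation
  set c : ℕ → ℝ := fun j => t ⟨min j n, by omega⟩ with hc
  have hcval : ∀ j (hj : j ≤ n), c j = t ⟨j, by omega⟩ := by
    intro j hj
    simp only [hc]
    congr 1
    exact Fin.ext (by simp [min_eq_left hj])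
  have hcmono : ∀ j j', j < j' → j' ≤ n → c j < c j' := by
    intro j j' h1 h2
    rw [hcval j (by omega), hcval j' h2]
    exact ht (by simp [Fin.lt_def]; omega)
  set a : ℝ := c i with ha
  set b : ℝ := c (i + 1) with hb
  have hab : a < b := hcmono i (i + 1) (by omega) hi
  set s : ℕ := n - i - 1 with hs
  set N : ℕ := 2 * s with hN
  set Z : ℝ := c n + 1 with hZ
  have hbZ : b + 1 ≤ Z := by
    rcases lt_or_eq_of_le hi with h | h
    · have := hcmono (i + 1) n (by omega) le_rfl
      rw [hZ]; linarith
    · rw [hZ, hb, h]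
  -- the polynomial u and the CM system
  set u : Polynomial ℝ := ∏ j ∈ Finset.range (i + 1), (X - C (c j)) ^ 2 with hu
  have humonic : u.Monic := monic_prod_of_monic _ _ (fun j _ => (monic_X_sub_C (c j)).pow 2)
  have hudeg : u.natDegree = 2 * (i + 1) := by
    rw [hu, natDegree_prod_of_monic _ _ (fun j _ => (monic_X_sub_C (c j)).pow 2)]
    have : ∀ j ∈ Finset.range (i + 1), ((X - C (c j)) ^ 2).natDegree = 2 := by
      intro j _
      rw [natDegree_pow, natDegree_X_sub_C]
    rw [Finset.sum_congr rfl this, Finset.sum_const, Finset.card_range, smul_eq_mul]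
    ring
  have hueval : ∀ x : ℝ, u.eval x = ∏ j ∈ Finset.range (i + 1), (x - c j) ^ 2 := by
    intro x
    rw [hu, eval_prod]
    simp
  have hunneg : ∀ x : ℝ, 0 ≤ u.eval x := by
    intro x
    rw [hueval]
    exact Finset.prod_nonneg fun j _ => sq_nonneg _
  have hune : ∀ x : ℝ, a < x → u.eval x ≠ 0 := by
    intro x hx
    rw [hueval]
    apply Finset.prod_ne_zero_iff.2
    intro j hj
    simp only [Finset.mem_range] at hj
    have : c j ≤ a := by
      rcases Nat.lt_or_ge j i with h | h
      · exact le_of_lt (hcmono j i h (by omega))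
      · have : j = i := by omega
        rw [this]
    have hlt : c j < x := lt_of_le_of_lt this hx
    exact pow_ne_zero _ (sub_ne_zero.2 (ne_of_gt hlt))
  set F : ℕ → ℝ → ℝ := prodSys c (i + 1) with hF
  have hcle : ∀ j < i + 1, c j ≤ a := by
    intro j hj
    rcases Nat.lt_or_ge j i with h | h
    · exact le_of_lt (hcmono j i h (by omega))
    · have : j = i := by omega
      rw [this]
  have hcm : IsCM a F := isCM_prodSys hcle
  have hF0 : ∀ x : ℝ, F 0 x = (u.eval x)⁻¹ := by
    intro x
    rw [hF, prodSys_zero, hueval, ← Finset.prod_inv_distrib]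
  -- bounds on compact interval
  have hbZle : b ≤ Z := by linarith
  obtain ⟨M, hM⟩ : ∃ M, ∀ x ∈ Set.Icc b Z, |F (N + 1) x| ≤ M := by
    have hcont : ContinuousOn (F (N + 1)) (Set.Icc b Z) := by
      intro x hx
      have : a < x := lt_of_lt_of_le hab hx.1
      exact ((hcm.1 (N + 1) x this).continuousAt).continuousWithinAt
    obtain ⟨M, hM⟩ := (isCompact_Icc).exists_bound_of_continuousOn hcont
    exact ⟨M, fun x hx => by simpa using hM x hx⟩
  have hMnn : 0 ≤ M := le_trans (abs_nonneg _) (hM b ⟨le_refl _, hbZle⟩)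
  obtain ⟨U₀, hU₀⟩ : ∃ U₀, (∀ x ∈ Set.Icc b Z, |u.eval x| ≤ U₀) ∧ 0 ≤ U₀ := by
    have hcont : ContinuousOn (fun x => u.eval x) (Set.Icc b Z) :=
      (Polynomial.continuous u).continuousOn
    obtain ⟨U₀, hU₀⟩ := (isCompact_Icc).exists_bound_of_continuousOn hcont
    refine ⟨U₀, fun x hx => by simpa using hU₀ x hx, ?_⟩
    exact le_trans (abs_nonneg _) (by simpa using hU₀ b ⟨le_refl _, hbZle⟩)
  obtain ⟨hU₀, hU₀nn⟩ := hU₀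
  set ℓ : ℝ := Z - b with hℓ
  have hℓ1 : 1 ≤ ℓ := by rw [hℓ]; linarith
  set CC : ℝ := U₀ * M * ℓ ^ N / (Nat.factorial (N + 1) : ℝ) with hCC
  have hCCnn : 0 ≤ CC := by
    apply div_nonneg _ (by positivity)
    have : (0:ℝ) ≤ ℓ ^ N := by positivity
    positivity
  -- gap bound
  obtain ⟨δ₀, hδ₀pos, hδ₀half, hδ₀gap⟩ : ∃ δ₀ : ℝ, 0 < δ₀ ∧ δ₀ ≤ 1/2 ∧
      ∀ j j', j < j' → j' ≤ n → δ₀ < c j' - c j := by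
    have hne : (Finset.univ : Finset (Fin n)).Nonempty := by
      rw [Finset.univ_nonempty_iff]
      exact Fin.pos_iff_nonempty.1 (by omega)
    set G : ℝ := Finset.univ.inf' hne (fun j : Fin n => c (j + 1) - c j) with hG
    have hGpos : 0 < G := by
      rw [hG, Finset.lt_inf'_iff]
      intro j _
      have := hcmono j (j + 1) (by omega) (by omega)
      linarith
    refine ⟨min (1/2) (G / 2), by positivity, min_le_left _ _, ?_⟩
    intro j j' hjj hj'
    have hstep : G ≤ c j' - c j := by
      have key : ∀ d, j + d + 1 ≤ n → G ≤ c (j + d + 1) - c j := by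
        intro d
        induction d with
        | zero =>
          intro hd
          have : G ≤ c (j + 1) - c j := by
            rw [hG]
            exact Finset.inf'_le _ (Finset.mem_univ (⟨j, by omega⟩ : Fin n))
          simpa using this
        | succ d ihd =>
          intro hd
          have h1 := ihd (by omega)
          have h2 : G ≤ c (j + d + 2) - c (j + d + 1) := by
            rw [hG]
            have := Finset.inf'_le (fun j : Fin n => c (j + 1) - c j)
              (Finset.mem_univ (⟨j + d + 1, by omega⟩ : Fin n))
            exact this
          have h3 := hcmono j (j + d + 1) (by omega) (by omega)
          have : j + (d + 1) + 1 = j + d + 2 := by omega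
          rw [this]
          linarith
      have : j' = j + (j' - j - 1) + 1 := by omega
      rw [this]
      exact key (j' - j - 1) (by omega)
    calc min (1/2) (G / 2) ≤ G / 2 := min_le_right _ _
      _ < G := by linarith
      _ ≤ c j' - c j := hstep
  -- main δ-dependent estimate
  have main : ∀ δ : ℝ, 0 < δ → δ ≤ δ₀ →
      ∑ j ∈ Finset.univ.filter (fun j : Fin (n + 1) => (j : ℕ) ≤ i), w j
        ≤ (μ (Set.Iio b)).toReal + CC * δ ^ 2 * (μ Set.univ).toReal := by
    intro δ hδpos hδδ₀
    have hδhalf : δ ≤ 1 / 2 := le_trans hδδ₀ hδ₀half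
    -- the perturbed node family
    set y : ℕ → ℝ := fun k => if k = 0 then b
      else c (i + 1 + (k + 1) / 2) + (if k % 2 = 0 then δ else 0) with hy
    have hy0 : y 0 = b := by simp [hy]
    have hyodd : ∀ j, y (2 * j + 1) = c (i + 2 + j) := by
      intro j
      have h1 : ¬(2 * j + 1 = 0) := by omega
      have h2 : ¬((2 * j + 1) % 2 = 0) := by omega
      have h3 : i + 1 + (2 * j + 1 + 1) / 2 = i + 2 + j := by omega
      simp only [hy]
      rw [if_neg h1, if_neg h2, h3, add_zero]
    have hyeven : ∀ j, y (2 * j + 2) = c (i + 2 + j) + δ := by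
      intro j
      have h1 : ¬(2 * j + 2 = 0) := by omega
      have h2 : (2 * j + 2) % 2 = 0 := by omega
      have h3 : i + 1 + (2 * j + 2 + 1) / 2 = i + 2 + j := by omega
      simp only [hy]
      rw [if_neg h1, if_pos h2, h3]
    have hyb : ∀ k ≤ N, b ≤ y k ∧ y k ≤ c n + δ := by
      intro k hk
      rcases Nat.eq_zero_or_pos k with rfl | hkpos
      · constructor
        · rw [hy0]
        · rw [hy0, hb]
          rcases lt_or_eq_of_le hi with h | h
          · have := hcmono (i + 1) n (by omega) le_rfl
            linarith
          · rw [h]; linarith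
      · have hidx1 : i + 2 ≤ i + 1 + (k + 1) / 2 := by omega
        have hidx2 : i + 1 + (k + 1) / 2 ≤ n := by
          have : (k + 1) / 2 ≤ s := by omega
          omega
        have hyk : y k = c (i + 1 + (k + 1) / 2) + (if k % 2 = 0 then δ else 0) := by
          rw [hy]
          simp only [if_neg (by omega : ¬(k = 0))]
        have hcub : c (i + 1 + (k + 1) / 2) ≤ c n := by
          rcases lt_or_eq_of_le hidx2 with h | h
          · exact le_of_lt (hcmono _ _ h le_rfl)
          · rw [h]
        have hclb : b ≤ c (i + 1 + (k + 1) / 2) := by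
          rw [hb]
          exact le_of_lt (hcmono (i + 1) _ (by omega) hidx2)
        constructor
        · rw [hyk]
          have : (0:ℝ) ≤ (if k % 2 = 0 then δ else 0) := by
            split
            · exact le_of_lt hδpos
            · exact le_refl 0
          linarith
        · rw [hyk]
          have : (if k % 2 = 0 then δ else 0) ≤ δ := by
            split
            · exact le_refl δ
            · exact le_of_lt hδpos
          linarith
    have hyZ : ∀ k ≤ N, y k ≤ Z := by
      intro k hk
      have := (hyb k hk).2
      rw [hZ]
      linarith
    have hyIoi : ∀ k ≤ N, y k ∈ Set.Ioi a := by
      intro k hk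
      have := (hyb k hk).1
      exact lt_of_lt_of_le hab this
    have hadj : ∀ k, k + 1 ≤ N → y k < y (k + 1) := by
      intro k hk
      rcases Nat.eq_zero_or_pos k with rfl | hkpos
      · have h1 : y 1 = c (i + 2) := by
          have := hyodd 0
          simpa using this
        rw [hy0, h1, hb]
        exact hcmono (i + 1) (i + 2) (by omega) (by omega)
      · rcases Nat.even_or_odd k with ⟨j, hj⟩ | ⟨j, hj⟩
        · -- k = 2j, k ≥ 1, so j ≥ 1 : k = 2(j-1)+2, k+1 = 2(j-1)+3... use k even: k = 2j
          have hj1 : 1 ≤ j := by omega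
          have hk1 : k = 2 * (j - 1) + 2 := by omega
          have hk2 : k + 1 = 2 * j + 1 := by omega
          rw [hk2, hyodd, hk1, hyeven]
          have hgap := hδ₀gap (i + 2 + (j - 1)) (i + 2 + j) (by omega) (by omega)
          linarith
        · -- k = 2j+1
          rw [hj, hyodd]
          have : 2 * j + 1 + 1 = 2 * j + 2 := by omega
          rw [this, hyeven]
          linarith
    have hymono : ∀ k k', k < k' → k' ≤ N → y k < y k' := mono_of_adj hadj
    -- the interpolant and the comparison polynomial
    set g : Polynomial ℝ := newton (F 0) y N with hg
    set q : Polynomial ℝ := 1 - u * g with hq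
    have hqe : ∀ x : ℝ, q.eval x = 1 - u.eval x * g.eval x := by
      intro x
      rw [hq]
      simp
    have hginterp : ∀ k ≤ N, g.eval (y k) = F 0 (y k) := by
      intro k hk
      exact newton_interp (F 0) y N (fun t t' h h' => ne_of_lt (hymono t t' h h')) N le_rfl k hk
    have hqnode : ∀ k ≤ N, q.eval (y k) = 0 := by
      intro k hk
      have hne := hune (y k) (hyIoi k hk)
      rw [hqe, hginterp k hk, hF0, mul_inv_cancel₀ hne]
      ring
    have h2n : 2 * n = 2 * (i + 1) + N := by omega
    have hqdeg : q.natDegree ≤ 2 * n := by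
      rw [hq]
      apply le_trans (natDegree_sub_le _ _)
      apply max_le (by simp)
      apply le_trans natDegree_mul_le
      rw [hudeg]
      have := newton_natDegree_le (F 0) y N
      rw [← hg] at this
      omega
    have hqcoeff : q.coeff (2 * n) = -(g.coeff N) := by
      rw [hq, coeff_sub, h2n]
      rw [coeff_mul_top humonic hudeg (newton_natDegree_le (F 0) y N)]
      have : (1 : Polynomial ℝ).coeff (2 * (i + 1) + N) = 0 := by
        rw [coeff_one]
        simp only [ite_eq_right_iff]
        intro h
        omega
      rw [this, zero_sub]
    have hgcoeffnn : 0 ≤ g.coeff N := by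
      rcases Nat.eq_zero_or_pos s with hs0 | hs1
      · have hN0 : N = 0 := by omega
        rw [hg, hN0]
        show 0 ≤ (newton (F 0) y 0).coeff 0
        rw [newton, coeff_C]
        simp only [if_pos rfl]
        rw [hF0, hy0]
        have := hunneg b
        positivity
      · have hN1 : N = (N - 1) + 1 := by omega
        obtain ⟨ξ, hξa, _, hmv⟩ := newton_coeff_mv hcm.1 y (N - 1)
          (fun t ht => hyIoi t (by omega)) (fun t t' h h' => hymono t t' h (by omega))
        rw [hg, hN1, hmv]
        have hsign := hcm.2 ((N - 1) + 1) ξ hξa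
        have heven : ((-1 : ℝ)) ^ ((N - 1) + 1) = 1 := by
          have : (N - 1) + 1 = 2 * s := by omega
          rw [this, pow_mul]
          norm_num
        rw [heven, one_mul] at hsign
        positivity
    -- the quadrature sum versus the weights
    have hsum : ∑ j ∈ Finset.univ.filter (fun j : Fin (n + 1) => (j : ℕ) ≤ i), w j
        ≤ ∑ j, w j * q.eval (t j) := by
      rw [Finset.sum_filter]
      apply Finset.sum_le_sum
      intro j _
      by_cases hji : (j : ℕ) ≤ i
      · rw [if_pos hji]
        have htj : t j = c (j : ℕ) := by
          rw [hcval (j : ℕ) (by omega)]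
        have hq1 : q.eval (t j) = 1 := by
          rw [htj, hqe]
          have hu0 : u.eval (c (j : ℕ)) = 0 := by
            rw [hueval]
            apply Finset.prod_eq_zero (Finset.mem_range.2 (by omega : (j : ℕ) < i + 1))
            ring
          rw [hu0]
          ring
        rw [hq1, mul_one]
      · rw [if_neg hji]
        push_neg at hji
        have hjval : (j : ℕ) ≤ n := by omega
        rcases Nat.lt_or_ge (j : ℕ) (i + 2) with hj2 | hj2
        · have : (j : ℕ) = i + 1 := by omega
          have htj : t j = y 0 := by
            rw [hy0, hb, ← this, hcval (j : ℕ) hjval]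
          rw [htj, hqnode 0 (by omega), mul_zero]
        · have hk : 2 * ((j : ℕ) - i - 2) + 1 ≤ N := by omega
          have htj : t j = y (2 * ((j : ℕ) - i - 2) + 1) := by
            rw [hyodd]
            have : i + 2 + ((j : ℕ) - i - 2) = (j : ℕ) := by omega
            rw [this, hcval (j : ℕ) hjval]
          rw [htj, hqnode _ hk, mul_zero]
    -- pointwise comparison with indicators
    have hRHSnn : ∀ x : ℝ, 0 ≤ (Set.indicator (Set.Iio b) (fun _ => (1:ℝ)) x)
        + (CC * δ ^ 2) * (Set.indicator (Set.Ioc b Z) (fun _ => (1:ℝ)) x) := by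
      intro x
      have h1 : 0 ≤ Set.indicator (Set.Iio b) (fun _ => (1:ℝ)) x :=
        Set.indicator_nonneg (fun _ _ => zero_le_one) x
      have h2 : 0 ≤ Set.indicator (Set.Ioc b Z) (fun _ => (1:ℝ)) x :=
        Set.indicator_nonneg (fun _ _ => zero_le_one) x
      have : 0 ≤ CC * δ ^ 2 := by positivity
      nlinarith
    have hpt : ∀ x : ℝ, q.eval x ≤ (Set.indicator (Set.Iio b) (fun _ => (1:ℝ)) x)
        + (CC * δ ^ 2) * (Set.indicator (Set.Ioc b Z) (fun _ => (1:ℝ)) x) := by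
      intro x
      rcases lt_trichotomy x b with hxb | hxb | hxb
      · -- x < b : bound by 1
        have hind1 : Set.indicator (Set.Iio b) (fun _ => (1:ℝ)) x = 1 :=
          Set.indicator_of_mem hxb (fun _ => (1:ℝ))
        have hind2 : Set.indicator (Set.Ioc b Z) (fun _ => (1:ℝ)) x = 0 :=
          Set.indicator_of_notMem (fun hc => absurd hc.1 (by linarith)) _
        rw [hind1, hind2, mul_zero, add_zero, hqe]
        have hgnn : 0 ≤ g.eval x := by
          rw [hg]
          exact newton_nonneg_left hcm y N hyIoi hymono x (by rw [hy0]; linarith)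
        nlinarith [hunneg x]
      · -- x = b
        subst hxb
        have := hqnode 0 (by omega)
        rw [hy0] at this
        rw [this]
        exact hRHSnn _
      · -- b < x
        by_cases hnode : ∃ k ≤ N, y k = x
        · obtain ⟨k, hk, hkx⟩ := hnode
          rw [← hkx, hqnode k hk]
          exact hRHSnn _
        · push_neg at hnode
          have hxIoi : x ∈ Set.Ioi a := lt_trans hab hxb
          obtain ⟨ξ, hξa, hξlo, hξhi, hrem⟩ := newton_remainder hcm.1 y N hyIoi hymono x hxIoi
            (fun t ht => hnode t ht)
          have hune' := hune x hxIoi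
          have hqe3 : q.eval x = u.eval x *
              (F (N + 1) ξ / (Nat.factorial (N + 1) : ℝ) * (nomega y (N + 1)).eval x) := by
            rw [← hrem, hqe, hF0]
            field_simp
            rw [hg]
          have hFsign : F (N + 1) ξ ≤ 0 := by
            have := hcm.2 (N + 1) ξ hξa
            have hodd : ((-1 : ℝ)) ^ (N + 1) = -1 := by
              rw [pow_succ, hN, pow_mul]
              norm_num
            rw [hodd] at this
            linarith
          rcases le_or_gt 0 ((nomega y (N + 1)).eval x) with hω | hω
          · -- nonneg weight: q ≤ 0
            have hqle : q.eval x ≤ 0 := by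
              rw [hqe3]
              apply mul_nonpos_of_nonneg_of_nonpos (hunneg x)
              apply mul_nonpos_of_nonpos_of_nonneg _ hω
              apply div_nonpos_of_nonpos_of_nonneg hFsign (by positivity)
            exact le_trans hqle (hRHSnn x)
          · -- ω < 0 : x sits in one of the tiny gaps
            have hpairdec : (nomega y (N + 1)).eval x
                = (∏ j ∈ Finset.range s, ((x - y (2 * j + 1)) * (x - y (2 * j + 2))))
                  * (x - y 0) := by
              rw [nomega_eval, Finset.prod_range_succ' (fun t => x - y t) N, hN,
                prod_pair (fun t => x - y t) s]
            obtain ⟨jj, hjjs, hjj1, hjj2⟩ :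
                ∃ jj, jj < s ∧ y (2 * jj + 1) < x ∧ x < y (2 * jj + 2) := by
              by_contra hno
              push_neg at hno
              have : 0 ≤ (nomega y (N + 1)).eval x := by
                rw [hpairdec]
                apply mul_nonneg _ (by rw [hy0]; linarith)
                apply Finset.prod_nonneg
                intro j hj
                simp only [Finset.mem_range] at hj
                rcases le_or_gt x (y (2 * j + 1)) with hle | hlt
                · have hlt2 : y (2 * j + 1) < y (2 * j + 2) := hymono _ _ (by omega) (by omega)
                  nlinarith
                · have := hno j hj hlt
                  nlinarith
              linarith
            have hzval : y (2 * jj + 1) = c (i + 2 + jj) := hyodd jj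
            have hzval2 : y (2 * jj + 2) = c (i + 2 + jj) + δ := hyeven jj
            have hxZ : x ≤ Z := by
              have h1 : y (2 * jj + 2) ≤ c n + δ := (hyb _ (by omega)).2
              rw [hZ]
              linarith
            have hxIcc : x ∈ Set.Icc b Z := Set.mem_Icc.2 ⟨le_of_lt hxb, hxZ⟩
            have hξIcc : ξ ∈ Set.Icc b Z := by
              constructor
              · calc b = min x (y 0) := by rw [hy0, min_eq_right (le_of_lt hxb)]
                  _ ≤ ξ := hξlo
              · calc ξ ≤ max x (y N) := hξhi
                  _ ≤ Z := max_le hxZ (hyZ N le_rfl)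
            -- bound |ω x|
            have hωabs : |(nomega y (N + 1)).eval x| ≤ δ ^ 2 * ℓ ^ N := by
              rw [nomega_eval, Finset.abs_prod]
              have hmem1 : 2 * jj + 1 ∈ Finset.range (N + 1) := Finset.mem_range.2 (by omega)
              have hmem2 : 2 * jj + 2 ∈ (Finset.range (N + 1)).erase (2 * jj + 1) := by
                rw [Finset.mem_erase]
                exact ⟨by omega, Finset.mem_range.2 (by omega)⟩
              rw [← Finset.mul_prod_erase _ _ hmem1, ← Finset.mul_prod_erase _ _ hmem2]
              have hb1 : |x - y (2 * jj + 1)| ≤ δ := by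
                rw [abs_le, hzval]
                rw [hzval] at hjj1
                rw [hzval2] at hjj2
                constructor
                · linarith
                · linarith
              have hb2 : |x - y (2 * jj + 2)| ≤ δ := by
                rw [abs_le, hzval2]
                rw [hzval] at hjj1
                rw [hzval2] at hjj2
                constructor
                · linarith
                · linarith
              have hrest : ∏ t ∈ ((Finset.range (N + 1)).erase (2 * jj + 1)).erase (2 * jj + 2),
                  |x - y t| ≤ ℓ ^ N := by
                have hcard : (((Finset.range (N + 1)).erase (2 * jj + 1)).erase (2 * jj + 2)).card
                    = N - 1 := by
                  rw [Finset.card_erase_of_mem hmem2, Finset.card_erase_of_mem hmem1,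
                    Finset.card_range]
                  omega
                calc ∏ t ∈ ((Finset.range (N + 1)).erase (2 * jj + 1)).erase (2 * jj + 2),
                      |x - y t|
                    ≤ ∏ _t ∈ ((Finset.range (N + 1)).erase (2 * jj + 1)).erase (2 * jj + 2), ℓ := by
                      apply Finset.prod_le_prod (fun _ _ => abs_nonneg _)
                      intro k hk
                      have hkN : k ≤ N := by
                        have := Finset.mem_of_mem_erase (Finset.mem_of_mem_erase hk)
                        simp only [Finset.mem_range] at this
                        omega
                      have hyk := hyb k hkN
                      have hykZ := hyZ k hkN
                      rw [abs_le, hℓ]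
                      constructor <;> linarith [hxIcc.1, hxIcc.2, hyk.1]
                  _ = ℓ ^ (N - 1) := by rw [Finset.prod_const, hcard]
                  _ ≤ ℓ ^ N := pow_le_pow_right₀ hℓ1 (by omega)
              calc |x - y (2 * jj + 1)| * (|x - y (2 * jj + 2)|
                    * ∏ t ∈ ((Finset.range (N + 1)).erase (2 * jj + 1)).erase (2 * jj + 2),
                        |x - y t|)
                  ≤ δ * (δ * ℓ ^ N) := by
                    apply mul_le_mul hb1 _ (by positivity) (le_of_lt hδpos)
                    apply mul_le_mul hb2 hrest (Finset.prod_nonneg fun _ _ => abs_nonneg _)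
                      (le_of_lt hδpos)
                  _ = δ ^ 2 * ℓ ^ N := by ring
            have hind2 : Set.indicator (Set.Ioc b Z) (fun _ => (1:ℝ)) x = 1 :=
              Set.indicator_of_mem (Set.mem_Ioc.2 ⟨hxb, hxZ⟩) _
            have hind1 : Set.indicator (Set.Iio b) (fun _ => (1:ℝ)) x = 0 :=
              Set.indicator_of_notMem (by simp only [Set.mem_Iio]; linarith) _
            rw [hind1, hind2, mul_one, zero_add]
            have hfactpos : (0:ℝ) < (Nat.factorial (N + 1) : ℝ) := by positivity
            calc q.eval x ≤ |q.eval x| := le_abs_self _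
              _ = |u.eval x| * (|F (N + 1) ξ| / (Nat.factorial (N + 1) : ℝ)
                  * |(nomega y (N + 1)).eval x|) := by
                  rw [hqe3, abs_mul, abs_mul, abs_div, abs_of_pos hfactpos]
              _ ≤ U₀ * (M / (Nat.factorial (N + 1) : ℝ) * (δ ^ 2 * ℓ ^ N)) := by
                  apply mul_le_mul (hU₀ x hxIcc) _ (by positivity) hU₀nn
                  apply mul_le_mul _ hωabs (abs_nonneg _) (by positivity)
                  exact (div_le_div_iff_of_pos_right hfactpos).2 (hM ξ hξIcc)
              _ = CC * δ ^ 2 := by rw [hCC]; ring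
    -- integrate
    have hint1 : Integrable (Set.indicator (Set.Iio b) fun _ => (1:ℝ)) μ :=
      (integrable_const 1).indicator measurableSet_Iio
    have hint2 : Integrable (Set.indicator (Set.Ioc b Z) fun _ => (1:ℝ)) μ :=
      (integrable_const 1).indicator measurableSet_Ioc
    have hintegral : (∫ x, q.eval x ∂μ)
        ≤ (μ (Set.Iio b)).toReal + CC * δ ^ 2 * (μ (Set.Ioc b Z)).toReal := by
      have hmono := integral_mono (hint q) (hint1.add (hint2.const_mul (CC * δ ^ 2))) hpt
      calc (∫ x, q.eval x ∂μ)
          ≤ ∫ x, (Set.indicator (Set.Iio b) (fun _ => (1:ℝ)) x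
              + (CC * δ ^ 2) * (Set.indicator (Set.Ioc b Z) (fun _ => (1:ℝ)) x)) ∂μ := hmono
        _ = (μ (Set.Iio b)).toReal + CC * δ ^ 2 * (μ (Set.Ioc b Z)).toReal := by
            rw [integral_add hint1 (hint2.const_mul (CC * δ ^ 2)), integral_const_mul (CC * δ ^ 2) _,
              integral_indicator_const (1:ℝ) measurableSet_Iio,
              integral_indicator_const (1:ℝ) measurableSet_Ioc, smul_eq_mul, smul_eq_mul,
              mul_one, mul_one]
            simp only [MeasureTheory.measureReal_def]
    have hlast : (μ (Set.Ioc b Z)).toReal ≤ (μ Set.univ).toReal :=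
      ENNReal.toReal_mono (measure_ne_top μ _) (measure_mono (Set.subset_univ _))
    have hquad := hE q hqdeg
    calc ∑ j ∈ Finset.univ.filter (fun j : Fin (n + 1) => (j : ℕ) ≤ i), w j
        ≤ ∑ j, w j * q.eval (t j) := hsum
      _ = (∫ x, q.eval x ∂μ) + κ * q.coeff (2 * n) := hquad
      _ ≤ (∫ x, q.eval x ∂μ) := by
          rw [hqcoeff]
          nlinarith [hgcoeffnn, hκ]
      _ ≤ (μ (Set.Iio b)).toReal + CC * δ ^ 2 * (μ (Set.Ioc b Z)).toReal := hintegral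
      _ ≤ (μ (Set.Iio b)).toReal + CC * δ ^ 2 * (μ Set.univ).toReal := by
          have : 0 ≤ CC * δ ^ 2 := by positivity
          nlinarith

  -- conclude by letting δ → 0
  by_contra hcon
  push_neg at hcon
  set LHS := ∑ j ∈ Finset.univ.filter (fun j : Fin (n + 1) => (j : ℕ) ≤ i), w j with hLHS
  set R := (μ (Set.Iio b)).toReal with hR
  set K := CC * (μ Set.univ).toReal with hK
  have hKnn : 0 ≤ K := mul_nonneg hCCnn ENNReal.toReal_nonneg
  set ε := LHS - R with hε
  have hεpos : 0 < ε := by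
    rw [hε]
    have hbt : b = t ⟨i + 1, by omega⟩ := hcval (i + 1) hi
    have : R < LHS := by
      rw [hR, hLHS, hbt]
      exact hcon
    linarith
  set δ := min δ₀ (Real.sqrt (ε / (2 * K + 1))) with hδ
  have hδpos : 0 < δ := by
    apply lt_min hδ₀pos
    apply Real.sqrt_pos.2
    positivity
  have hmain := main δ hδpos (min_le_left _ _)
  have hδ2 : δ ^ 2 ≤ ε / (2 * K + 1) := by
    have h1 : δ ≤ Real.sqrt (ε / (2 * K + 1)) := min_le_right _ _
    have h2 : 0 ≤ δ := le_of_lt hδpos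
    calc δ ^ 2 ≤ Real.sqrt (ε / (2 * K + 1)) ^ 2 := by
          apply pow_le_pow_left₀ h2 h1
      _ = ε / (2 * K + 1) := Real.sq_sqrt (by positivity)
  have hKδ : K * δ ^ 2 < ε := by
    calc K * δ ^ 2 ≤ K * (ε / (2 * K + 1)) := by
          apply mul_le_mul_of_nonneg_left hδ2 hKnn
      _ ≤ (1/2) * ε := by
          rw [mul_div_assoc']
          rw [div_le_iff₀ (by positivity)]
          ring_nf
          nlinarith
      _ < ε := by linarith
  have : LHS ≤ R + K * δ ^ 2 := by
    calc LHS ≤ R + CC * δ ^ 2 * (μ Set.univ).toReal := hmain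
      _ = R + K * δ ^ 2 := by rw [hK]; ring
  rw [hε] at hKδ
  linarith

lemma coeff_comp_neg (q : Polynomial ℝ) (k : ℕ) :
    (q.comp (-X)).coeff k = (-1 : ℝ) ^ k * q.coeff k := by
  rw [comp_eq_sum_left, Polynomial.coeff_sum, Polynomial.sum_def]
  have hterm : ∀ e ∈ q.support,
      (C (q.coeff e) * (-X : Polynomial ℝ) ^ e).coeff k
        = if k = e then (-1 : ℝ) ^ e * q.coeff e else 0 := by
    intro e _
    have hpow : (-X : Polynomial ℝ) ^ e = C ((-1 : ℝ) ^ e) * X ^ e := by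
      rw [neg_pow]
      congr 1
      rw [← C_1, ← C_neg, ← C_pow]
    rw [hpow, ← mul_assoc, ← C_mul, coeff_C_mul, coeff_X_pow]
    split
    · ring
    · ring
  rw [Finset.sum_congr rfl hterm, Finset.sum_ite_eq q.support k
    (fun e => (-1 : ℝ) ^ e * q.coeff e)]
  split
  · rfl
  · rename_i hns
    rw [Polynomial.notMem_support_iff.1 hns, mul_zero]

open MeasureTheory in
lemma coreL (μ : Measure ℝ) [IsFiniteMeasure μ]
    (hint : ∀ q : Polynomial ℝ, Integrable (fun x => q.eval x) μ)
    (n : ℕ) (hn : 1 ≤ n) (t : Fin (n + 1) → ℝ) (ht : StrictMono t)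
    (w : Fin (n + 1) → ℝ) (hw : ∀ j, 0 < w j)
    (κ : ℝ) (hκ : 0 ≤ κ)
    (hE : ∀ q : Polynomial ℝ, q.natDegree ≤ 2 * n →
      ∑ j, w j * q.eval (t j) = (∫ x, q.eval x ∂μ) + κ * q.coeff (2 * n))
    (k : ℕ) (hk : k + 1 ≤ n) :
    ∑ j ∈ Finset.univ.filter (fun j : Fin (n + 1) => k + 1 ≤ (j : ℕ)), w j
      ≤ (μ (Set.Ioi (t ⟨k, by omega⟩))).toReal := by
  classical
  set μ' : Measure ℝ := Measure.map (fun x => -x) μ with hμ'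
  haveI : IsFiniteMeasure μ' := Measure.isFiniteMeasure_map μ _
  have hmeas : Measurable (fun x : ℝ => -x) := measurable_neg
  have hint' : ∀ q : Polynomial ℝ, Integrable (fun x => q.eval x) μ' := by
    intro q
    rw [hμ', integrable_map_measure (Polynomial.continuous q).aestronglyMeasurable
      hmeas.aemeasurable]
    have : ((fun x => q.eval x) ∘ fun x : ℝ => -x) = fun x => (q.comp (-X)).eval x := by
      funext x
      simp [Function.comp, eval_comp]
    rw [this]
    exact hint _
  have hintegral' : ∀ q : Polynomial ℝ, (∫ x, q.eval x ∂μ') = ∫ x, q.eval (-x) ∂μ := by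
    intro q
    rw [hμ', integral_map hmeas.aemeasurable (Polynomial.continuous q).aestronglyMeasurable]
  set t' : Fin (n + 1) → ℝ := fun j => -t j.rev with ht'def
  set w' : Fin (n + 1) → ℝ := fun j => w j.rev with hw'def
  have ht' : StrictMono t' := by
    intro j j' hjj
    simp only [ht'def, neg_lt_neg_iff]
    exact ht (Fin.rev_lt_rev.2 hjj)
  have hw' : ∀ j, 0 < w' j := fun j => hw _
  have hE' : ∀ q : Polynomial ℝ, q.natDegree ≤ 2 * n →
      ∑ j, w' j * q.eval (t' j) = (∫ x, q.eval x ∂μ') + κ * q.coeff (2 * n) := by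
    intro q hq
    set q' : Polynomial ℝ := q.comp (-X) with hq'def
    have hq'deg : q'.natDegree ≤ 2 * n := by
      apply le_trans (natDegree_comp_le)
      have : (-X : Polynomial ℝ).natDegree = 1 := by
        rw [natDegree_neg, natDegree_X]
      rw [this, mul_one]
      exact hq
    have hsum : ∑ j, w' j * q.eval (t' j) = ∑ j, w j * q'.eval (t j) := by
      apply Fintype.sum_bijective Fin.rev Fin.rev_bijective
      intro j
      simp only [ht'def, hw'def, hq'def, eval_comp, eval_neg, eval_X, Fin.rev_rev]
    have hcoeff : q'.coeff (2 * n) = q.coeff (2 * n) := by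
      rw [hq'def, coeff_comp_neg]
      have : (-1 : ℝ) ^ (2 * n) = 1 := by
        rw [pow_mul]
        norm_num
      rw [this, one_mul]
    have hintq : (∫ x, q'.eval x ∂μ) = ∫ x, q.eval x ∂μ' := by
      rw [hintegral' q]
      congr 1
      funext x
      rw [hq'def, eval_comp]
      simp
    rw [hsum, hE q' hq'deg, hintq, hcoeff]
  have hres := coreU μ' hint' n hn t' ht' w' hw' κ hκ hE' (n - 1 - k) (by omega)
  -- rewrite the right-hand side
  have hidx : (⟨n - 1 - k + 1, by omega⟩ : Fin (n + 1)).rev = ⟨k, by omega⟩ := by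
    apply Fin.ext
    rw [Fin.val_rev]
    simp only
    omega
  have hRHS : μ' (Set.Iio (t' ⟨n - 1 - k + 1, by omega⟩)) = μ (Set.Ioi (t ⟨k, by omega⟩)) := by
    rw [hμ', Measure.map_apply hmeas measurableSet_Iio]
    congr 1
    ext x
    simp only [Set.mem_preimage, Set.mem_Iio, Set.mem_Ioi, ht'def, hidx]
    constructor <;> intro h <;> linarith
  rw [hRHS] at hres
  -- rewrite the left-hand side
  have hLHS : ∑ j ∈ Finset.univ.filter (fun j : Fin (n + 1) => (j : ℕ) ≤ n - 1 - k), w' j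
      = ∑ j ∈ Finset.univ.filter (fun j : Fin (n + 1) => k + 1 ≤ (j : ℕ)), w j := by
    rw [Finset.sum_filter, Finset.sum_filter]
    apply Fintype.sum_bijective Fin.rev Fin.rev_bijective
    intro j
    have hv : ((Fin.rev j : Fin (n + 1)) : ℕ) = n - (j : ℕ) := by
      rw [Fin.val_rev]
      omega
    have hjn : (j : ℕ) ≤ n := by omega
    by_cases hc : (j : ℕ) ≤ n - 1 - k
    · rw [if_pos hc, if_pos (by rw [hv]; omega)]
    · rw [if_neg hc, if_neg (by rw [hv]; omega)]
  rw [← hLHS]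
  exact hres

end Stmt3Aux

open Stmt3Aux in
/-- Inequality (2.14): bounds on the weights of `G*_{m+1}` in terms of the measure of
intervals between consecutive-but-one nodes.  Nodes are `0`-indexed, so `x*_k` of the
paper (1-indexed, `k = 1, …, m+1`) is `xs ⟨k-1, _⟩` here. -/
theorem stmt3
    (μ : Measure ℝ)
    (hint : ∀ q : Polynomial ℝ, Integrable (fun x => q.eval x) μ)
    (hsupp : {x : ℝ | ∀ ε > 0, 0 < μ (Set.Ioo (x - ε) (x + ε))}.Infinite)
    (p : ℕ → Polynomial ℝ)
    (hmonic : ∀ n, (p n).Monic)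
    (hdeg : ∀ n, (p n).natDegree = n)
    (horth : ∀ n, ∀ j < n, ∫ x, x ^ j * (p n).eval x ∂μ = 0)
    (m : ℕ) (hm : 1 ≤ m)
    (βm βm1 : ℝ)
    (hβm : βm = (∫ x, ((p m).eval x) ^ 2 ∂μ) / (∫ x, ((p (m - 1)).eval x) ^ 2 ∂μ))
    (hβm1 : βm1 = (∫ x, ((p (m + 1)).eval x) ^ 2 ∂μ) / (∫ x, ((p m).eval x) ^ 2 ∂μ))
    (hβmpos : 0 < βm) (hβm1pos : 0 < βm1)
    (xG wG : Fin m → ℝ)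
    (hxG : StrictMono xG)
    (hzeros : ∀ j, (p m).eval (xG j) = 0)
    (hwG : ∀ j, 0 < wG j)
    (hGauss : ∀ q : Polynomial ℝ, q.natDegree ≤ 2 * m - 1 →
      ∑ j, wG j * q.eval (xG j) = ∫ x, q.eval x ∂μ)
    (xs ws : Fin (m + 1) → ℝ)
    (hxs : StrictMono xs)
    (hws : ∀ k, 0 < ws k)
    (hGstar : ∀ q : Polynomial ℝ, q.natDegree ≤ 2 * m + 2 →
      ∑ k, ws k * q.eval (xs k) =
        (∫ x, q.eval x ∂μ) +
          (βm1 / βm) * ((∫ x, q.eval x ∂μ) - ∑ j, wG j * q.eval (xG j))) :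
    ws ⟨0, by omega⟩ ≤ (μ (Set.Iic (xs ⟨1, by omega⟩))).toReal ∧
    (∀ i : ℕ, ∀ _h1 : 1 ≤ i, ∀ _h2 : i ≤ m - 1,
      ws ⟨i, by omega⟩ ≤
        (μ (Set.Ioc (xs ⟨i - 1, by omega⟩) (xs ⟨i + 1, by omega⟩))).toReal) ∧
    ws ⟨m, by omega⟩ ≤ (μ (Set.Ioi (xs ⟨m - 1, by omega⟩))).toReal := by
  classical
  haveI : IsFiniteMeasure μ := by
    have h1 := hint 1
    simp only [eval_one] at h1
    rcases MeasureTheory.integrable_const_iff.1 h1 with h | h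
    · norm_num at h
    · exact h
  set r := βm1 / βm with hr
  have hrpos : 0 < r := div_pos hβm1pos hβmpos
  set Ipm2 := ∫ x, ((p m).eval x) ^ 2 ∂μ with hIpm2
  have hIpm2nn : 0 ≤ Ipm2 := integral_nonneg (fun x => sq_nonneg _)
  set κ := r * Ipm2 with hκdef
  have hκ : 0 ≤ κ := mul_nonneg (le_of_lt hrpos) hIpm2nn
  have hpm2eval : ∀ x, ((p m) ^ 2).eval x = ((p m).eval x) ^ 2 := by
    intro x; rw [eval_pow]
  have hpm2deg : ((p m) ^ 2).natDegree = 2 * m := by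
    rw [natDegree_pow, hdeg m]
  have hpm2coeff : ((p m) ^ 2).coeff (2 * m) = 1 := by
    have hmon : ((p m) ^ 2).Monic := (hmonic m).pow 2
    have := hmon.coeff_natDegree
    rwa [hpm2deg] at this
  have hE : ∀ q : Polynomial ℝ, q.natDegree ≤ 2 * m →
      ∑ k, ws k * q.eval (xs k) = (∫ x, q.eval x ∂μ) + κ * q.coeff (2 * m) := by
    intro q hq
    set A := q.coeff (2 * m) with hA
    set l := q - C A * (p m) ^ 2 with hl
    have hleval : ∀ x, l.eval x = q.eval x - A * ((p m).eval x) ^ 2 := by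
      intro x
      rw [hl]
      simp [eval_pow]
    have hldeg : l.natDegree ≤ 2 * m - 1 := by
      have h1 : l.natDegree ≤ 2 * m := by
        rw [hl]
        apply le_trans (natDegree_sub_le _ _)
        apply max_le hq
        apply le_trans natDegree_mul_le
        simp [natDegree_C, hpm2deg]
      have h2 : l.coeff (2 * m) = 0 := by
        rw [hl, coeff_sub, coeff_C_mul, hpm2coeff, mul_one, ← hA, sub_self]
      by_contra hcon
      push_neg at hcon
      have h3 : l.natDegree = 2 * m := by omega
      have h4 : l ≠ 0 := by
        intro h
        rw [h] at h3
        simp at h3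
        omega
      have h5 := Polynomial.leadingCoeff_ne_zero.2 h4
      rw [Polynomial.leadingCoeff, h3, h2] at h5
      exact h5 rfl
    have hGl := hGauss l hldeg
    have hqG : ∀ j, q.eval (xG j) = l.eval (xG j) := by
      intro j
      rw [hleval, hzeros]
      ring
    have hsG : ∑ j, wG j * q.eval (xG j) = ∫ x, l.eval x ∂μ := by
      rw [← hGl]
      apply Finset.sum_congr rfl
      intro j _
      rw [hqG]
    have hintl : Integrable (fun x => l.eval x) μ := hint l
    have hintp2 : Integrable (fun x => A * ((p m).eval x) ^ 2) μ := by
      have h := (hint ((p m) ^ 2)).const_mul A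
      have he : (fun x => A * ((p m) ^ 2).eval x) = fun x => A * ((p m).eval x) ^ 2 := by
        funext x
        rw [hpm2eval]
      rwa [he] at h
    have hiq : (∫ x, q.eval x ∂μ) = (∫ x, l.eval x ∂μ) + A * Ipm2 := by
      have he : (fun x => q.eval x) = fun x => l.eval x + A * ((p m).eval x) ^ 2 := by
        funext x
        rw [hleval]
        ring
      rw [he, integral_add hintl hintp2, MeasureTheory.integral_const_mul, hIpm2]
    have hstar := hGstar q (by omega)
    rw [hstar, hsG, hiq, hκdef]
    ring
  have hTotal : ∑ j, ws j = (μ Set.univ).toReal := by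
    have h1 := hE 1 (by simp)
    simp only [eval_one, mul_one] at h1
    rw [h1, coeff_one, if_neg (by omega : ¬(2 * m = 0)), mul_zero, add_zero, integral_const,
      smul_eq_mul, mul_one, MeasureTheory.measureReal_def]
  refine ⟨?_, ?_, ?_⟩
  · -- first weight
    have hcore := coreU μ hint m hm xs hxs ws hws κ hκ hE 0 (by omega)
    have hmem : (⟨0, by omega⟩ : Fin (m + 1)) ∈
        Finset.univ.filter (fun j : Fin (m + 1) => (j : ℕ) ≤ 0) := by
      simp
    have hle : ws ⟨0, by omega⟩
        ≤ ∑ j ∈ Finset.univ.filter (fun j : Fin (m + 1) => (j : ℕ) ≤ 0), ws j :=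
      Finset.single_le_sum (fun j _ => le_of_lt (hws j)) hmem
    refine le_trans (le_trans hle hcore) ?_
    exact ENNReal.toReal_mono (measure_ne_top μ _) (measure_mono Set.Iio_subset_Iic_self)
  · -- middle weights
    intro i h1 h2
    have him : i + 1 ≤ m := by omega
    have hcoreU := coreU μ hint m hm xs hxs ws hws κ hκ hE i (by omega)
    have hcoreL := coreL μ hint m hm xs hxs ws hws κ hκ hE (i - 1) (by omega)
    have hfiltL : Finset.univ.filter (fun j : Fin (m + 1) => i - 1 + 1 ≤ (j : ℕ))
        = Finset.univ.filter (fun j : Fin (m + 1) => i ≤ (j : ℕ)) := by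
      ext j
      simp only [Finset.mem_filter, Finset.mem_univ, true_and]
      omega
    rw [hfiltL] at hcoreL
    -- partition identity
    set SA := Finset.univ.filter (fun j : Fin (m + 1) => (j : ℕ) ≤ i) with hSA
    set SB := Finset.univ.filter (fun j : Fin (m + 1) => i ≤ (j : ℕ)) with hSB
    have hunion : SA ∪ SB = Finset.univ := by
      rw [hSA, hSB]
      ext j
      simp only [Finset.mem_union, Finset.mem_filter, Finset.mem_univ, true_and]
      exact iff_true_intro (Nat.le_total (↑j) i)
    have hinter : SA ∩ SB = {(⟨i, by omega⟩ : Fin (m + 1))} := by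
      rw [hSA, hSB]
      ext j
      simp only [Finset.mem_inter, Finset.mem_filter, Finset.mem_univ, true_and,
        Finset.mem_singleton]
      constructor
      · rintro ⟨ha, hb⟩
        apply Fin.ext
        simp only
        omega
      · intro hh
        rw [hh]
        simp only
        omega
    have hpart : ∑ j ∈ SA, ws j + ∑ j ∈ SB, ws j = ∑ j, ws j + ws ⟨i, by omega⟩ := by
      have hsi : ∑ j ∈ SA ∪ SB, ws j + ∑ j ∈ SA ∩ SB, ws j
          = ∑ j ∈ SA, ws j + ∑ j ∈ SB, ws j := Finset.sum_union_inter
      rw [hunion, hinter, Finset.sum_singleton] at hsi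
      linarith
    -- measure identity
    set aa := xs ⟨i - 1, by omega⟩ with haa
    set bb := xs ⟨i + 1, by omega⟩ with hbb
    have haabb : aa < bb := by
      rw [haa, hbb]
      apply hxs
      simp only [Fin.lt_def]
      omega
    have hmeas : (μ (Set.Iio bb)).toReal + (μ (Set.Ioi aa)).toReal
        = (μ Set.univ).toReal + (μ (Set.Ioo aa bb)).toReal := by
      have hui : Set.Iio bb ∪ Set.Ioi aa = Set.univ := by
        ext x
        simp only [Set.mem_union, Set.mem_Iio, Set.mem_Ioi, Set.mem_univ, iff_true]
        by_cases hx : x < bb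
        · exact Or.inl hx
        · right; push_neg at hx; linarith
      have hii : Set.Iio bb ∩ Set.Ioi aa = Set.Ioo aa bb := by
        ext x
        simp only [Set.mem_inter_iff, Set.mem_Iio, Set.mem_Ioi, Set.mem_Ioo]
        tauto
      have hmi := measure_union_add_inter (μ := μ) (Set.Iio bb) (measurableSet_Ioi (a := aa))
      rw [hui, hii] at hmi
      have := congrArg ENNReal.toReal hmi
      rw [ENNReal.toReal_add (measure_ne_top μ _) (measure_ne_top μ _),
        ENNReal.toReal_add (measure_ne_top μ _) (measure_ne_top μ _)] at this
      linarith
    have hOooOoc : (μ (Set.Ioo aa bb)).toReal ≤ (μ (Set.Ioc aa bb)).toReal :=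
      ENNReal.toReal_mono (measure_ne_top μ _) (measure_mono Set.Ioo_subset_Ioc_self)
    have hfin : ws ⟨i, by omega⟩ = ∑ j ∈ SA, ws j + ∑ j ∈ SB, ws j - ∑ j, ws j := by
      linarith
    rw [hfin, hTotal]
    calc ∑ j ∈ SA, ws j + ∑ j ∈ SB, ws j - (μ Set.univ).toReal
        ≤ (μ (Set.Iio bb)).toReal + (μ (Set.Ioi aa)).toReal - (μ Set.univ).toReal := by
          have hU : ∑ j ∈ SA, ws j ≤ (μ (Set.Iio bb)).toReal := hcoreU
          have hL : ∑ j ∈ SB, ws j ≤ (μ (Set.Ioi aa)).toReal := hcoreL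
          linarith
      _ = (μ (Set.Ioo aa bb)).toReal := by linarith
      _ ≤ (μ (Set.Ioc aa bb)).toReal := hOooOoc
  · -- last weight
    have hcore := coreL μ hint m hm xs hxs ws hws κ hκ hE (m - 1) (by omega)
    have hmem : (⟨m, by omega⟩ : Fin (m + 1)) ∈
        Finset.univ.filter (fun j : Fin (m + 1) => m - 1 + 1 ≤ (j : ℕ)) := by
      simp only [Finset.mem_filter, Finset.mem_univ, true_and]
      omega
    have hle : ws ⟨m, by omega⟩
        ≤ ∑ j ∈ Finset.univ.filter (fun j : Fin (m + 1) => m - 1 + 1 ≤ (j : ℕ)), ws j :=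
      Finset.single_le_sum (fun j _ => le_of_lt (hws j)) hmem
    exact le_trans hle hcore
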